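/- arXiv:0707.0850 — 2 statements merged into one kernel-verified Lean document; each statement's English description precedes it below -/
import Mathlib

section
/- Let B and C be complex 2m×2m matrices and suppose the 2m×4m block matrix (B C) has full rank 2m (i.e., the boundary conditions By₁ + Cy₂ = 0 are linearly independent). Suppose there exists a 2m×2m matrix A such that for all vectors x, y₁, y₂ ∈ ℂ^{2m} with x ∈ B⁻¹(im C) and By₁ + Cy₂ = 0 one has ⟨y₂, x⟩ = ⟨A y₁, x⟩. Then B⁻¹(im C) = (ker C)^⊥, where B⁻¹(im C) denotes the full preimage of im C under B. -/
open Matrix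

set_option maxRecDepth 4000

/-- If (B C) has full rank 2m and there is a matrix A with
⟨y₂, x⟩ = ⟨A y₁, x⟩ for all x ∈ B⁻¹(im C) and all y₁, y₂ with By₁ + Cy₂ = 0,
then B⁻¹(im C) = (ker C)ᗮ. -/
theorem stmt_0 (m : ℕ) (hm : 0 < m)
    (B C A : Matrix (Fin (2 * m)) (Fin (2 * m)) ℂ)
    (hrank : LinearIndependent ℂ
      (fun i : Fin (2 * m) => (Sum.elim (B i) (C i) : Fin (2 * m) ⊕ Fin (2 * m) → ℂ)))
    (hA : ∀ x y₁ y₂ : EuclideanSpace ℂ (Fin (2 * m)),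
      x ∈ Submodule.comap (Matrix.toEuclideanLin B)
            (LinearMap.range (Matrix.toEuclideanLin C)) →
      Matrix.toEuclideanLin B y₁ + Matrix.toEuclideanLin C y₂ = 0 →
      (inner ℂ y₂ x : ℂ) = inner ℂ (Matrix.toEuclideanLin A y₁) x) :
    Submodule.comap (Matrix.toEuclideanLin B)
        (LinearMap.range (Matrix.toEuclideanLin C))
      = (LinearMap.ker (Matrix.toEuclideanLin C))ᗮ := by
  set E := EuclideanSpace ℂ (Fin (2 * m))
  set f := Matrix.toEuclideanLin B with hf
  set g := Matrix.toEuclideanLin C with hg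
  set p := Submodule.comap f (LinearMap.range g) with hp
  -- easy inclusion
  have hle : p ≤ (LinearMap.ker g)ᗮ := by
    intro x hx
    rw [Submodule.mem_orthogonal]
    intro y hy
    have h0 : f (0 : E) + g y = 0 := by
      simp [LinearMap.mem_ker.mp hy]
    have := hA x 0 y hx h0
    simpa using this
  -- sup of ranges is top
  have hsup : LinearMap.range f ⊔ LinearMap.range g = ⊤ := by
    rw [← Submodule.orthogonal_eq_bot_iff]
    rw [Submodule.eq_bot_iff]
    intro x hx
    have hxB : ∀ v : E, (inner ℂ (f v) x : ℂ) = 0 := fun v =>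
      hx _ (Submodule.mem_sup_left (LinearMap.mem_range_self f v))
    have hxC : ∀ v : E, (inner ℂ (g v) x : ℂ) = 0 := fun v =>
      hx _ (Submodule.mem_sup_right (LinearMap.mem_range_self g v))
    have key := Fintype.linearIndependent_iff.mp hrank (fun j => star (x j)) ?_
    · ext j
      have := key j
      simpa using congrArg star this
    · funext k
      cases k with
      | inl k =>
        have h1 := hxB (EuclideanSpace.single k 1)
        have h2 : (inner ℂ (f (EuclideanSpace.single k 1)) x : ℂ)
            = ∑ j, (starRingEnd ℂ) (B j k) * x j := by
          rw [PiLp.inner_apply]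
          congr 1
          funext j
          have : f (EuclideanSpace.single k 1) j = B j k := by
            show (B *ᵥ Pi.single k 1) j = B j k
            simp [Matrix.mulVec_single]
          rw [this]
          simp [RCLike.inner_apply, mul_comm]
        have h3 : ∑ j, (starRingEnd ℂ) (B j k) * x j = 0 := by rw [← h2]; exact h1
        have h4 := congrArg star h3
        simp only [star_sum, star_mul', starRingEnd_apply, star_star, star_zero] at h4
        simpa [Finset.sum_apply, mul_comm] using h4
      | inr k =>
        have h1 := hxC (EuclideanSpace.single k 1)
        have h2 : (inner ℂ (g (EuclideanSpace.single k 1)) x : ℂ)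
            = ∑ j, (starRingEnd ℂ) (C j k) * x j := by
          rw [PiLp.inner_apply]
          congr 1
          funext j
          have : g (EuclideanSpace.single k 1) j = C j k := by
            show (C *ᵥ Pi.single k 1) j = C j k
            simp [Matrix.mulVec_single]
          rw [this]
          simp [RCLike.inner_apply, mul_comm]
        have h3 : ∑ j, (starRingEnd ℂ) (C j k) * x j = 0 := by rw [← h2]; exact h1
        have h4 := congrArg star h3
        simp only [star_sum, star_mul', starRingEnd_apply, star_star, star_zero] at h4
        simpa [Finset.sum_apply, mul_comm] using h4
  -- finrank computations
  have hker_le : LinearMap.ker f ≤ p := by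
    intro x hx
    simp only [hp, Submodule.mem_comap, LinearMap.mem_ker.mp hx]
    exact Submodule.zero_mem _
  have hmap : Submodule.map f p = LinearMap.range f ⊓ LinearMap.range g :=
    Submodule.map_comap_eq f _
  have hrn_restr := LinearMap.finrank_range_add_finrank_ker (f.domRestrict p)
  rw [LinearMap.range_domRestrict, LinearMap.ker_domRestrict] at hrn_restr
  have hker_eq : Module.finrank ℂ (Submodule.comap p.subtype (LinearMap.ker f))
      = Module.finrank ℂ (LinearMap.ker f) :=
    (Submodule.comapSubtypeEquivOfLe hker_le).finrank_eq
  have hsupinf := Submodule.finrank_sup_add_finrank_inf_eq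
    (LinearMap.range f) (LinearMap.range g)
  rw [hsup, finrank_top] at hsupinf
  have hrnf := LinearMap.finrank_range_add_finrank_ker f
  have hrng := LinearMap.finrank_range_add_finrank_ker g
  have horth := Submodule.finrank_add_finrank_orthogonal (K := LinearMap.ker g)
  have hfinp : Module.finrank ℂ p = Module.finrank ℂ (LinearMap.ker g)ᗮ := by
    rw [hmap, hker_eq] at hrn_restr
    omega
  exact Submodule.eq_of_le_of_finrank_le hle (le_of_eq hfinp.symm)
end

section
/- Consider the boundary conditions of the example: U₁(y) = −y'''(0) + y''(0) + y(0), U₂(y) = y'''(1) + y(1), U₃(y) = y'(0), U₄(y) = y'(1) for the fourth-order expression L y = y''''. Writing these in the quasi-derivative form B y^∧ + C y^∨ = 0 with y^∧ = (y(0), y'(0), y(1), y'(1))ᵗ and y^∨ = (y'''(0), y''(0), −y'''(1), −y''(1))ᵗ (quasi-derivatives reduce to ordinary derivatives since all lower-order coefficients vanish), the resulting matrices B and C satisfy B⁻¹(im C) ≠ ℂ⁴ ⊖ ker C. That is, the full preimage of im C under B does not equal the orthogonal complement of ker C. -/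
open Matrix

/-- For the example L y = y'''' with boundary conditions
−y'''(0)+y''(0)+y(0)=0, y'''(1)+y(1)=0, y'(0)=0, y'(1)=0, written as
B y^∧ + C y^∨ = 0 with y^∧ = (y(0), y'(0), y(1), y'(1))ᵗ and
y^∨ = (y'''(0), y''(0), −y'''(1), −y''(1))ᵗ, the matrices B and C satisfy
B⁻¹(im C) ≠ (ker C)ᗮ, i.e. the operator is not completely regular. -/
theorem stmt_8
    (B C : Matrix (Fin 4) (Fin 4) ℂ)
    (hB : B = !![1, 0, 0, 0;
                 0, 0, 1, 0;
                 0, 1, 0, 0;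
                 0, 0, 0, 1])
    (hC : C = !![-1, 1, 0, 0;
                 0, 0, -1, 0;
                 0, 0, 0, 0;
                 0, 0, 0, 0]) :
    Submodule.comap (Matrix.toEuclideanLin B)
        (LinearMap.range (Matrix.toEuclideanLin C))
      ≠ (LinearMap.ker (Matrix.toEuclideanLin C))ᗮ := by
  subst hB hC
  intro h
  set v : EuclideanSpace ℂ (Fin 4) := (WithLp.equiv 2 _).symm ![1,0,0,0] with hv
  have key : (!![-1, 1, 0, 0; 0, 0, -1, 0; 0, 0, 0, 0; 0, 0, 0, 0] : Matrix (Fin 4) (Fin 4) ℂ) *ᵥ ![-1,0,0,0]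
      = (!![1, 0, 0, 0; 0, 0, 1, 0; 0, 1, 0, 0; 0, 0, 0, 1] : Matrix (Fin 4) (Fin 4) ℂ) *ᵥ ![1,0,0,0] := by
    funext i
    fin_cases i <;>
      simp [Matrix.mulVec, dotProduct, Fin.sum_univ_four, Matrix.vecHead, Matrix.vecTail]
  have hmem : v ∈ Submodule.comap
      (Matrix.toEuclideanLin (!![1, 0, 0, 0; 0, 0, 1, 0; 0, 1, 0, 0; 0, 0, 0, 1] : Matrix (Fin 4) (Fin 4) ℂ))
      (LinearMap.range (Matrix.toEuclideanLin (!![-1, 1, 0, 0; 0, 0, -1, 0; 0, 0, 0, 0; 0, 0, 0, 0] : Matrix (Fin 4) (Fin 4) ℂ))) := by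
    refine ⟨(WithLp.equiv 2 _).symm ![-1,0,0,0], ?_⟩
    rw [hv, WithLp.equiv_symm_apply, toEuclideanLin_toLp, toEuclideanLin_toLp]
    simp only [Matrix.toLin'_apply]
    rw [key]
  rw [h] at hmem
  set u : EuclideanSpace ℂ (Fin 4) := (WithLp.equiv 2 _).symm ![1,1,0,0] with hu
  have key2 : (!![-1, 1, 0, 0; 0, 0, -1, 0; 0, 0, 0, 0; 0, 0, 0, 0] : Matrix (Fin 4) (Fin 4) ℂ) *ᵥ ![1,1,0,0] = 0 := by
    funext i
    fin_cases i <;>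
      simp [Matrix.mulVec, dotProduct, Fin.sum_univ_four, Matrix.vecHead, Matrix.vecTail]
  have hker : u ∈ LinearMap.ker
      (Matrix.toEuclideanLin (!![-1, 1, 0, 0; 0, 0, -1, 0; 0, 0, 0, 0; 0, 0, 0, 0] : Matrix (Fin 4) (Fin 4) ℂ)) := by
    rw [LinearMap.mem_ker, hu, WithLp.equiv_symm_apply, toEuclideanLin_toLp]
    simp only [Matrix.toLin'_apply]
    rw [key2]
    rfl
  have h0 := hmem u hker
  rw [hu, hv] at h0
  simp [EuclideanSpace.inner_eq_star_dotProduct, dotProduct, Fin.sum_univ_four,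
    Matrix.star_apply, Matrix.vecHead, Matrix.vecTail] at h0
end
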